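/- Let y, γ ∈ ℝ, v > 0, β > 0, λ ∈ ℝ, and define α(o) = log(exp(o) + 1) + 1. Let L(o) = (1/2)·log(π/v) − α(o)·log(Ω) + (α(o) + 1/2)·log((y − γ)²·v + Ω) + log(Real.Gamma(α(o))) − log(Real.Gamma(α(o) + 1/2)) with Ω = 2β(1 + v), and let R(o) = |y − γ|·(2v + α(o)). Then the derivative of the total ERN loss o ↦ L(o) + λ·R(o) tends to 0 as o → −∞. -/

import Mathlib

open Real Filter

/-- SoftPlus activation plus one. -/
noncomputable def softplusAlpha (o : ℝ) : ℝ := Real.log (Real.exp o + 1) + 1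

lemma softplusAlpha_ge_one (o : ℝ) : 1 ≤ softplusAlpha o := by
  have : (0:ℝ) ≤ Real.log (Real.exp o + 1) :=
    Real.log_nonneg (by linarith [Real.exp_pos o])
  unfold softplusAlpha; linarith

lemma ne_neg_nat_of_pos {x : ℝ} (hx : 0 < x) : ∀ m : ℕ, x ≠ -m := fun m h => by
  have h0 : (0:ℝ) ≤ (m:ℝ) := Nat.cast_nonneg m
  rw [h] at hx; linarith

lemma hasDerivAt_softplusAlpha (o : ℝ) :
    HasDerivAt softplusAlpha (Real.exp o / (Real.exp o + 1)) o := by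
  have h1 : HasDerivAt (fun o : ℝ => Real.exp o + 1) (Real.exp o) o :=
    (Real.hasDerivAt_exp o).add_const 1
  have h2 := h1.log (by positivity)
  show HasDerivAt (fun x => Real.log (Real.exp x + 1) + 1) _ o
  simpa using h2.add_const 1

lemma continuousAt_deriv_Gamma {x : ℝ} (hx : 0 < x) :
    ContinuousAt (deriv Real.Gamma) x := by
  set U : Set ℂ := {z | 0 < z.re} with hU
  have hUopen : IsOpen U := isOpen_lt continuous_const Complex.continuous_re
  have hdiff : DifferentiableOn ℂ Complex.Gamma U := by
    intro z hz
    refine (Complex.differentiableAt_Gamma z fun m => ?_).differentiableWithinAt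
    intro h
    have : z.re = -(m:ℝ) := by rw [h]; simp
    have hz' : 0 < z.re := hz
    rw [this] at hz'
    have : (0:ℝ) ≤ (m:ℝ) := Nat.cast_nonneg m
    linarith
  have hanal : AnalyticOnNhd ℂ Complex.Gamma U := hdiff.analyticOnNhd hUopen
  have hderivanal : AnalyticOnNhd ℂ (deriv Complex.Gamma) U := hanal.deriv
  have hxU : (x : ℂ) ∈ U := by simpa [hU] using hx
  have hcont : ContinuousAt (fun t : ℝ => (deriv Complex.Gamma t).re) x :=
    Complex.continuous_re.continuousAt.comp
      (((hderivanal _ hxU).continuousAt).comp Complex.continuous_ofReal.continuousAt)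
  refine hcont.congr ?_
  filter_upwards [Ioi_mem_nhds hx] with t ht
  have hd : HasDerivAt Real.Gamma (deriv Complex.Gamma t).re t := by
    have hG : DifferentiableAt ℂ Complex.Gamma (t:ℂ) := by
      refine Complex.differentiableAt_Gamma _ fun m => ?_
      intro h
      have h1 : (t:ℝ) = -(m:ℝ) := by exact_mod_cast h
      have h0 : (0:ℝ) ≤ (m:ℝ) := Nat.cast_nonneg m
      have : (0:ℝ) < t := ht
      linarith
    have := hG.hasDerivAt.real_of_complex
    simpa [Complex.Gamma_ofReal] using this
  exact (hd.deriv).symm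

theorem stmt_3 (y γ v β lam : ℝ) (hv : 0 < v) (hβ : 0 < β) :
    Tendsto
      (deriv (fun o : ℝ =>
        ((1 / 2) * Real.log (Real.pi / v)
          - softplusAlpha o * Real.log (2 * β * (1 + v))
          + (softplusAlpha o + 1 / 2) * Real.log ((y - γ) ^ 2 * v + 2 * β * (1 + v))
          + Real.log (Real.Gamma (softplusAlpha o))
          - Real.log (Real.Gamma (softplusAlpha o + 1 / 2)))
        + lam * (|y - γ| * (2 * v + softplusAlpha o))))
      atBot (nhds 0) := by
  set c2 : ℝ := Real.log (2 * β * (1 + v)) with hc2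
  set c3 : ℝ := Real.log ((y - γ) ^ 2 * v + 2 * β * (1 + v)) with hc3
  set G : ℝ → ℝ := fun x => -c2 + c3 + deriv Real.Gamma x / Real.Gamma x
      - deriv Real.Gamma (x + 1/2) / Real.Gamma (x + 1/2) + lam * |y - γ| with hG
  have hapos : ∀ o : ℝ, 0 < softplusAlpha o := fun o =>
    lt_of_lt_of_le one_pos (softplusAlpha_ge_one o)
  have hapos' : ∀ o : ℝ, 0 < softplusAlpha o + 1/2 := fun o => by
    linarith [hapos o]
  -- derivative formula
  have hderiv : ∀ o : ℝ, deriv (fun o : ℝ =>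
        ((1 / 2) * Real.log (Real.pi / v)
          - softplusAlpha o * Real.log (2 * β * (1 + v))
          + (softplusAlpha o + 1 / 2) * Real.log ((y - γ) ^ 2 * v + 2 * β * (1 + v))
          + Real.log (Real.Gamma (softplusAlpha o))
          - Real.log (Real.Gamma (softplusAlpha o + 1 / 2)))
        + lam * (|y - γ| * (2 * v + softplusAlpha o))) o
      = (Real.exp o / (Real.exp o + 1)) * G (softplusAlpha o) := by
    intro o
    set s : ℝ := Real.exp o / (Real.exp o + 1) with hs
    have ha := hasDerivAt_softplusAlpha o
    have hΓ1 : HasDerivAt (fun o => Real.Gamma (softplusAlpha o))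
        (deriv Real.Gamma (softplusAlpha o) * s) o :=
      ((Real.differentiableAt_Gamma (ne_neg_nat_of_pos (hapos o))).hasDerivAt).comp o ha
    have hΓ2 : HasDerivAt (fun o => Real.Gamma (softplusAlpha o + 1/2))
        (deriv Real.Gamma (softplusAlpha o + 1/2) * s) o :=
      by
        have := ((Real.differentiableAt_Gamma (ne_neg_nat_of_pos (hapos' o))).hasDerivAt).comp o
          (ha.add_const (1/2))
        exact this
    have hne1 : Real.Gamma (softplusAlpha o) ≠ 0 := (Real.Gamma_pos_of_pos (hapos o)).ne'
    have hne2 : Real.Gamma (softplusAlpha o + 1/2) ≠ 0 :=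
      (Real.Gamma_pos_of_pos (hapos' o)).ne'
    have H : HasDerivAt (fun o : ℝ =>
        ((1 / 2) * Real.log (Real.pi / v)
          - softplusAlpha o * Real.log (2 * β * (1 + v))
          + (softplusAlpha o + 1 / 2) * Real.log ((y - γ) ^ 2 * v + 2 * β * (1 + v))
          + Real.log (Real.Gamma (softplusAlpha o))
          - Real.log (Real.Gamma (softplusAlpha o + 1 / 2)))
        + lam * (|y - γ| * (2 * v + softplusAlpha o)))
        ((0 - s * c2 + s * c3 + (deriv Real.Gamma (softplusAlpha o) * s) /
            Real.Gamma (softplusAlpha o)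
          - (deriv Real.Gamma (softplusAlpha o + 1/2) * s) /
            Real.Gamma (softplusAlpha o + 1/2))
          + lam * (|y - γ| * s)) o := by
      exact (((((hasDerivAt_const o ((1/2) * Real.log (Real.pi / v))).sub
        (ha.mul_const c2)).add ((ha.add_const (1/2)).mul_const c3)).add
        (hΓ1.log hne1)).sub (hΓ2.log hne2)).add
        (((ha.const_add (2*v)).const_mul (|y - γ|)).const_mul lam)
    rw [H.deriv, hG]
    field_simp
    ring
  rw [funext hderiv]
  -- limits
  have hexp : Tendsto Real.exp atBot (nhds 0) := Real.tendsto_exp_atBot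
  have hs0 : Tendsto (fun o => Real.exp o / (Real.exp o + 1)) atBot (nhds 0) := by
    have := hexp.div (hexp.add_const 1) (by norm_num)
    rw [zero_div] at this
    exact this
  have hα : Tendsto softplusAlpha atBot (nhds 1) := by
    have h1 : Tendsto (fun o => Real.exp o + 1) atBot (nhds 1) := by
      simpa using hexp.add_const 1
    have h2 : Tendsto (fun o => Real.log (Real.exp o + 1)) atBot (nhds 0) := by
      have := ((Real.continuousAt_log (one_ne_zero)).tendsto).comp h1
      rw [Real.log_one] at this
      exact this
    have := h2.add_const 1
    show Tendsto (fun x => Real.log (Real.exp x + 1) + 1) atBot (nhds 1)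
    simpa using this
  have hGc : ContinuousAt G 1 := by
    have hc32 : (0:ℝ) < 1 + 1/2 := by norm_num
    have hΓc1 : ContinuousAt Real.Gamma 1 :=
      (Real.differentiableAt_Gamma (ne_neg_nat_of_pos one_pos)).continuousAt
    have hadd : ContinuousAt (fun x : ℝ => x + 1/2) 1 := by fun_prop
    have hΓc2 : ContinuousAt (fun x : ℝ => Real.Gamma (x + 1/2)) 1 := by
      exact ContinuousAt.comp (g := Real.Gamma) (f := fun x : ℝ => x + 1/2) (x := (1:ℝ))
        ((Real.differentiableAt_Gamma (ne_neg_nat_of_pos hc32)).continuousAt) hadd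
    have hdc1 : ContinuousAt (deriv Real.Gamma) 1 := continuousAt_deriv_Gamma one_pos
    have hdc2 : ContinuousAt (fun x : ℝ => deriv Real.Gamma (x + 1/2)) 1 := by
      exact ContinuousAt.comp (g := deriv Real.Gamma) (f := fun x : ℝ => x + 1/2) (x := (1:ℝ))
        (continuousAt_deriv_Gamma hc32) hadd
    have hne1 : Real.Gamma (1:ℝ) ≠ 0 := (Real.Gamma_pos_of_pos one_pos).ne'
    have hne2 : Real.Gamma ((1:ℝ) + 1/2) ≠ 0 := (Real.Gamma_pos_of_pos hc32).ne'
    exact ((((continuousAt_const.add continuousAt_const).add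
      (hdc1.div hΓc1 hne1)).sub (hdc2.div hΓc2 hne2)).add continuousAt_const)
  have : Tendsto (fun o => (Real.exp o / (Real.exp o + 1)) * G (softplusAlpha o))
      atBot (nhds (0 * G 1)) := hs0.mul (hGc.tendsto.comp hα)
  simpa using this
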